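/- Let f = (f^{(1)},…,f^{(d)}) ∈ ℝ^{n×d}, let 0 ≠ w ∈ ℝ^d, a ∈ ℝⁿ, and λ > 0, and define E(x;f,a,w) = ½‖f−x‖_F² + λ‖xw−a‖ for x ∈ ℝ^{n×d}. Then E(·;f,a,w) has the unique global minimizer x̂ = f − m s wᵀ, where s = (fw−a)/‖fw−a‖ if fw ≠ a and s = 0 otherwise, and m = min{λ, ‖fw−a‖/‖w‖²}. -/

import Mathlib

open scoped Classical

noncomputable section

set_option maxHeartbeats 1000000

lemma aux_pos1' {n : ℕ} (g : Fin n → ℝ) (h : g ≠ 0) : 0 < ∑ i, g i ^ 2 := by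
  obtain ⟨i, hi⟩ := Function.ne_iff.mp h
  exact Finset.sum_pos' (fun j _ => sq_nonneg _)
    ⟨i, Finset.mem_univ i, lt_of_le_of_ne (sq_nonneg _) (Ne.symm (pow_ne_zero 2 hi))⟩

lemma aux_pos2' {n d : ℕ} (g : Fin n → Fin d → ℝ) (h : g ≠ 0) :
    0 < ∑ i, ∑ j, g i j ^ 2 := by
  obtain ⟨i, hi⟩ := Function.ne_iff.mp h
  exact Finset.sum_pos' (fun j _ => Finset.sum_nonneg fun _ _ => sq_nonneg _)
    ⟨i, Finset.mem_univ i, aux_pos1' _ hi⟩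

lemma aux_cs' {n : ℕ} (s y : Fin n → ℝ) (hK : ∑ i, s i ^ 2 = 1) :
    ∑ i, s i * y i ≤ Real.sqrt (∑ i, y i ^ 2) := by
  have h := Finset.sum_mul_sq_le_sq_mul_sq Finset.univ s y
  rw [hK, one_mul] at h
  calc ∑ i, s i * y i ≤ |∑ i, s i * y i| := le_abs_self _
    _ = Real.sqrt ((∑ i, s i * y i) ^ 2) := (Real.sqrt_sq_eq_abs _).symm
    _ ≤ Real.sqrt (∑ i, y i ^ 2) := Real.sqrt_le_sqrt h

/-- **Lemma 3.2 (minimizer part).** For data `f ∈ ℝ^{n×d}`, a nonzero vector `w ∈ ℝ^d`,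
an offset `a ∈ ℝⁿ` and `λ > 0`, the functional
`E(x; f, a, w) = ½‖f − x‖_F² + λ‖xw − a‖` has the unique global minimizer
`x̂ = f − m s wᵀ` with `s = (fw−a)/‖fw−a‖` (or `0` if `fw = a`) and
`m = min{λ, ‖fw−a‖/‖w‖²}`. -/
theorem second_order_tv_unique_prox_minimizer
    (n d : ℕ) (f : Fin n → Fin d → ℝ) (w : Fin d → ℝ) (hw : w ≠ 0)
    (a : Fin n → ℝ) (lam : ℝ) (hlam : 0 < lam)
    (E : (Fin n → Fin d → ℝ) → ℝ)
    (hE : ∀ x, E x = (1 / 2) * (∑ i, ∑ j, (f i j - x i j) ^ 2)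
        + lam * Real.sqrt (∑ i, (∑ j, x i j * w j - a i) ^ 2))
    (s : Fin n → ℝ)
    (hs : s = if (fun i => ∑ j, f i j * w j - a i) = (0 : Fin n → ℝ) then 0
        else fun i => (∑ j, f i j * w j - a i)
            / Real.sqrt (∑ i', (∑ j, f i' j * w j - a i') ^ 2))
    (mv : ℝ)
    (hmv : mv = min lam
        (Real.sqrt (∑ i, (∑ j, f i j * w j - a i) ^ 2) / (∑ j, (w j) ^ 2)))
    (xhat : Fin n → Fin d → ℝ)
    (hxhat : xhat = fun i j => f i j - mv * s i * w j) :
    ∀ x : Fin n → Fin d → ℝ, x ≠ xhat → E xhat < E x := by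
  intro x hx
  set b : Fin n → ℝ := fun i => (∑ j, f i j * w j) - a i with hbdef
  have hbi : ∀ i, (∑ j, f i j * w j) - a i = b i := fun i => by rw [hbdef]
  have hW : 0 < ∑ j, (w j) ^ 2 := aux_pos1' w hw
  by_cases hb : b = 0
  · -- degenerate case: `xhat = f`
    have hs0 : s = 0 := by rw [hs, if_pos hb]
    have hxf : xhat = f := by
      rw [hxhat, hs0]; funext i j; simp
    have hb' : ∀ i, (∑ j, f i j * w j) - a i = 0 := by
      intro i; rw [hbi i, hb]; rfl
    have hz : (∑ i, (∑ j, f i j * w j - a i) ^ 2) = 0 :=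
      Finset.sum_eq_zero fun i _ => by rw [hb' i]; norm_num
    have hE0 : E xhat = 0 := by
      rw [hE, hxf, hz]
      simp
    rw [hE0, hE x]
    have hfxne : (fun i j => f i j - x i j) ≠ 0 := by
      intro h
      apply hx
      rw [hxf]
      funext i j
      have := congrFun (congrFun h i) j
      simp at this
      linarith
    have h1 : 0 < ∑ i, ∑ j, (f i j - x i j) ^ 2 := aux_pos2' _ hfxne
    have h2 : 0 ≤ Real.sqrt (∑ i, (∑ j, x i j * w j - a i) ^ 2) := Real.sqrt_nonneg _
    nlinarith
  · -- main case
    set W := ∑ j, (w j) ^ 2 with hWdef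
    have hWe : (∑ j, (w j) ^ 2) = W := rfl
    set B := Real.sqrt (∑ i, b i ^ 2) with hBdef
    have hBpos : 0 < B := Real.sqrt_pos.mpr (aux_pos1' b hb)
    have hsdef : s = fun i => b i / B := by
      rw [hs, if_neg hb]
    have hbs : ∀ i, b i = B * s i := by
      intro i; rw [hsdef]; field_simp
    have hB2 : B ^ 2 = ∑ i, b i ^ 2 := Real.sq_sqrt (le_of_lt (aux_pos1' b hb))
    have hK : ∑ i, s i ^ 2 = 1 := by
      rw [hsdef]
      simp only [div_pow]
      rw [← Finset.sum_div, ← hB2]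
      field_simp
    have hm0 : 0 ≤ mv := by
      rw [hmv]
      exact le_min (le_of_lt hlam) (div_nonneg (le_of_lt hBpos) (le_of_lt hW))
    have hml : mv ≤ lam := hmv ▸ min_le_left _ _
    set r := B - mv * W with hrdef
    have hmvB : mv * W ≤ B := by
      have h1 : mv ≤ B / W := hmv ▸ min_le_right _ _
      calc mv * W ≤ (B / W) * W := by nlinarith
        _ = B := by field_simp
    have hr0 : 0 ≤ r := by rw [hrdef]; linarith
    set u : Fin n → Fin d → ℝ := fun i j => x i j - xhat i j with hudef
    have hu : u ≠ 0 := by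
      intro h
      apply hx
      funext i j
      have := congrFun (congrFun h i) j
      simp [hudef] at this
      linarith
    set U : Fin n → ℝ := fun i => ∑ j, u i j * w j with hUdef
    have hUi : ∀ i, (∑ j, u i j * w j) = U i := fun i => by rw [hUdef]
    set c := ∑ i, s i * U i with hcdef
    set Q := ∑ i, ∑ j, u i j ^ 2 with hQdef
    have hQe : (∑ i, ∑ j, u i j ^ 2) = Q := rfl
    have hQ : 0 < Q := aux_pos2' u hu
    -- expansion of the quadratic term at x
    have hfx : ∀ i j, f i j - x i j = mv * s i * w j - u i j := by
      intro i j; simp only [hudef, hxhat]; ring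
    have hin1 : ∀ i, ∑ j, (f i j - x i j) ^ 2
        = mv ^ 2 * s i ^ 2 * W - 2 * mv * s i * U i + ∑ j, u i j ^ 2 := by
      intro i
      have e : ∀ j ∈ Finset.univ, (f i j - x i j) ^ 2
          = (mv ^ 2 * s i ^ 2) * (w j) ^ 2 - (2 * mv * s i) * (u i j * w j) + u i j ^ 2 :=
        fun j _ => by rw [hfx i j]; ring
      rw [Finset.sum_congr rfl e, Finset.sum_add_distrib,
        Finset.sum_sub_distrib, ← Finset.mul_sum, ← Finset.mul_sum, hWe, hUi i]
    have hsum1 : (∑ i, ∑ j, (f i j - x i j) ^ 2) = mv ^ 2 * W - 2 * mv * c + Q := by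
      rw [Finset.sum_congr rfl fun i _ => hin1 i, Finset.sum_add_distrib,
        Finset.sum_sub_distrib]
      have e1 : (∑ i, mv ^ 2 * s i ^ 2 * W) = mv ^ 2 * W := by
        calc (∑ i, mv ^ 2 * s i ^ 2 * W) = (mv ^ 2 * W) * ∑ i, s i ^ 2 := by
              rw [Finset.mul_sum]
              exact Finset.sum_congr rfl fun i _ => by ring
          _ = mv ^ 2 * W := by rw [hK]; ring
      have e2 : (∑ i, 2 * mv * s i * U i) = 2 * mv * c := by
        rw [hcdef, Finset.mul_sum]
        exact Finset.sum_congr rfl fun i _ => by ring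
      rw [e1, e2, hQe]
    -- expansion of the quadratic term at xhat
    have hin2 : ∀ i, ∑ j, (f i j - xhat i j) ^ 2 = mv ^ 2 * s i ^ 2 * W := by
      intro i
      have e : ∀ j ∈ Finset.univ, (f i j - xhat i j) ^ 2 = (mv ^ 2 * s i ^ 2) * (w j) ^ 2 :=
        fun j _ => by rw [hxhat]; ring
      rw [Finset.sum_congr rfl e, ← Finset.mul_sum, hWe]
    have hsum2 : (∑ i, ∑ j, (f i j - xhat i j) ^ 2) = mv ^ 2 * W := by
      rw [Finset.sum_congr rfl fun i _ => hin2 i]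
      calc (∑ i, mv ^ 2 * s i ^ 2 * W) = (mv ^ 2 * W) * ∑ i, s i ^ 2 := by
            rw [Finset.mul_sum]
            exact Finset.sum_congr rfl fun i _ => by ring
        _ = mv ^ 2 * W := by rw [hK]; ring
    -- the residual terms
    have hfw : ∀ i, (∑ j, f i j * w j) = B * s i + a i := by
      intro i
      have h1 := hbs i
      rw [← hbi i] at h1
      linarith
    have hxw : ∀ i, (∑ j, x i j * w j) - a i = r * s i + U i := by
      intro i
      have e : ∀ j ∈ Finset.univ, x i j * w j
          = f i j * w j - (mv * s i) * (w j) ^ 2 + u i j * w j :=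
        fun j _ => by simp only [hudef, hxhat]; ring
      rw [Finset.sum_congr rfl e, Finset.sum_add_distrib, Finset.sum_sub_distrib,
        ← Finset.mul_sum, hWe, hUi i, hfw i, hrdef]
      ring
    have hxhatw : ∀ i, (∑ j, xhat i j * w j) - a i = r * s i := by
      intro i
      have e : ∀ j ∈ Finset.univ, xhat i j * w j
          = f i j * w j - (mv * s i) * (w j) ^ 2 :=
        fun j _ => by simp only [hxhat]; ring
      rw [Finset.sum_congr rfl e, Finset.sum_sub_distrib,
        ← Finset.mul_sum, hWe, hfw i, hrdef]
      ring
    have hT0sum : (∑ i, (∑ j, xhat i j * w j - a i) ^ 2) = r ^ 2 := by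
      have e : ∀ i ∈ Finset.univ, ((∑ j, xhat i j * w j) - a i) ^ 2 = r ^ 2 * s i ^ 2 :=
        fun i _ => by rw [hxhatw i]; ring
      rw [Finset.sum_congr rfl e, ← Finset.mul_sum, hK, mul_one]
    have hT1sum : (∑ i, (∑ j, x i j * w j - a i) ^ 2) = ∑ i, (r * s i + U i) ^ 2 :=
      Finset.sum_congr rfl fun i _ => by rw [hxw i]
    -- the key Cauchy–Schwarz inequality
    have hT1 : r + c ≤ Real.sqrt (∑ i, (r * s i + U i) ^ 2) := by
      have h := aux_cs' s (fun i => r * s i + U i) hK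
      have e : (∑ i, s i * (r * s i + U i)) = r + c := by
        have e' : ∀ i ∈ Finset.univ, s i * (r * s i + U i) = r * s i ^ 2 + s i * U i :=
          fun i _ => by ring
        rw [Finset.sum_congr rfl e', Finset.sum_add_distrib, ← Finset.mul_sum, hK, hcdef]
        ring
      rw [e] at h
      exact h
    have hsqrt0 : 0 ≤ Real.sqrt (∑ i, (r * s i + U i) ^ 2) := Real.sqrt_nonneg _
    have key : lam * r + mv * c ≤ lam * Real.sqrt (∑ i, (r * s i + U i) ^ 2) := by
      rcases min_cases lam
          (Real.sqrt (∑ i, (∑ j, f i j * w j - a i) ^ 2) / (∑ j, (w j) ^ 2)) with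
        ⟨h1, h2⟩ | ⟨h1, h2⟩
      -- case `mv = lam`
      · have hmvl : mv = lam := hmv.trans h1
        rw [hmvl]
        nlinarith
      -- case `mv = B / W`, so `r = 0`
      · have hBW : (Real.sqrt (∑ i, (∑ j, f i j * w j - a i) ^ 2) / (∑ j, (w j) ^ 2))
            = B / W := by
          rw [hWe, hBdef]
        have hmvl : mv = B / W := (hmv.trans h1).trans hBW
        have hlt : B / W < lam := hBW ▸ h2
        have hrz : r = 0 := by
          rw [hrdef, hmvl]
          field_simp
          ring
        rw [hrz] at hT1 ⊢
        simp only [zero_add] at hT1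
        have hmll : mv ≤ lam := le_of_lt (hmvl ▸ hlt)
        have hA : 0 ≤ mv * (Real.sqrt (∑ i, (0 * s i + U i) ^ 2) - c) :=
          mul_nonneg hm0 (sub_nonneg.mpr hT1)
        have hB' : 0 ≤ (lam - mv) * Real.sqrt (∑ i, (0 * s i + U i) ^ 2) :=
          mul_nonneg (sub_nonneg.mpr hmll) (Real.sqrt_nonneg _)
        nlinarith [hA, hB']
    -- conclusion
    rw [hE x, hE xhat, hsum1, hsum2, hT0sum, hT1sum, Real.sqrt_sq hr0]
    clear_value b W B r u U c Q
    linarith [key, hQ]
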